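/- Let Y be an m×n real matrix such that I_n − YᵀY is positive definite. Then I_m − YYᵀ is positive definite, and the block matrix A = [[(I_n−YᵀY)^{−1/2}, Yᵀ(I_m−YYᵀ)^{−1/2}], [Y(I_n−YᵀY)^{−1/2}, (I_m−YYᵀ)^{−1/2}]] (where M^{−1/2} denotes the inverse of the unique positive definite square root of a positive definite matrix M) satisfies Aᵀ J A = J, i.e. A ∈ O(n,m), and A maps the subspace L₀ onto the column span of [I_n; Y]. -/

import Mathlib

open Matrix

noncomputable section

/-- The diagonal matrix with `n` entries `1` followed by `m` entries `-1`. -/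
def J (n m : ℕ) : Matrix (Fin n ⊕ Fin m) (Fin n ⊕ Fin m) ℝ :=
  Matrix.fromBlocks 1 0 0 (-1)

/-- The subspace of `ℝ^{n+m}` spanned by the first `n` standard basis vectors. -/
def L0 (n m : ℕ) : Submodule ℝ (Fin n ⊕ Fin m → ℝ) :=
  Submodule.span ℝ (Set.range fun i : Fin n => (Pi.single (Sum.inl i) 1 : Fin n ⊕ Fin m → ℝ))

/-- The positive semidefinite square root of a positive semidefinite matrix
(the definition Mathlib had in December 2024, since removed). -/
def Matrix.PosSemidef.sqrt {n : Type*} [Fintype n] [DecidableEq n] {𝕜 : Type*} [RCLike 𝕜]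
    [PartialOrder 𝕜] [StarOrderedRing 𝕜] {A : Matrix n n 𝕜} (hA : A.PosSemidef) : Matrix n n 𝕜 :=
  hA.isHermitian.eigenvectorUnitary.1 * diagonal ((↑) ∘ (√·) ∘ hA.isHermitian.eigenvalues) *
    (star hA.isHermitian.eigenvectorUnitary : Matrix n n 𝕜)

lemma Matrix.PosSemidef.sqrt_mul_self {n : Type*} [Fintype n] [DecidableEq n]
    {A : Matrix n n ℝ} (hA : A.PosSemidef) : hA.sqrt * hA.sqrt = A := by
  let C : Matrix n n ℝ := hA.isHermitian.eigenvectorUnitary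
  let E : Matrix n n ℝ := diagonal (RCLike.ofReal ∘ (√·) ∘ hA.isHermitian.eigenvalues)
  have hC : star C * C = 1 := Unitary.coe_star_mul_self _
  have hE : E * E = diagonal (RCLike.ofReal ∘ hA.isHermitian.eigenvalues) := by
    rw [diagonal_mul_diagonal]
    congr 1
    funext i
    simp [Real.mul_self_sqrt (hA.eigenvalues_nonneg i)]
  calc hA.sqrt * hA.sqrt = C * (E * (star C * C) * E) * star C := by
        simp only [Matrix.PosSemidef.sqrt, C, E, Matrix.mul_assoc]
    _ = C * diagonal (RCLike.ofReal ∘ hA.isHermitian.eigenvalues) * star C := by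
        rw [hC, Matrix.mul_one, hE]
    _ = A := by
        conv_rhs => rw [hA.isHermitian.spectral_theorem]
        rfl

lemma Matrix.PosSemidef.posSemidef_sqrt {n : Type*} [Fintype n] [DecidableEq n]
    {A : Matrix n n ℝ} (hA : A.PosSemidef) : hA.sqrt.PosSemidef := by
  have h := (Matrix.posSemidef_diagonal_iff (d := (RCLike.ofReal ∘ (√·) ∘ hA.isHermitian.eigenvalues :
    n → ℝ))).mpr (fun i => by simp [Real.sqrt_nonneg])
  have := h.mul_mul_conjTranspose_same (hA.isHermitian.eigenvectorUnitary : Matrix n n ℝ)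
  exact this

lemma dot_cs {ι : Type*} [Fintype ι] (u w : ι → ℝ) :
    (u ⬝ᵥ w) ^ 2 ≤ (u ⬝ᵥ u) * (w ⬝ᵥ w) := by
  simpa [dotProduct, sq] using Finset.sum_mul_sq_le_sq_mul_sq Finset.univ u w

lemma dot_nonneg {ι : Type*} [Fintype ι] (u : ι → ℝ) : 0 ≤ u ⬝ᵥ u := by
  simpa [dotProduct, ← sq] using Finset.sum_nonneg fun i _ => sq_nonneg (u i)

lemma dot_pos {ι : Type*} [Fintype ι] {u : ι → ℝ} (hu : u ≠ 0) : 0 < u ⬝ᵥ u :=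
  lt_of_le_of_ne (dot_nonneg u) fun h => hu (dotProduct_self_eq_zero.mp h.symm)

lemma posdef_swap {n m : ℕ} (Y : Matrix (Fin m) (Fin n) ℝ)
    (hY : (1 - Yᵀ * Y).PosDef) : (1 - Y * Yᵀ).PosDef := by
  refine Matrix.PosDef.of_dotProduct_mulVec_pos ?_ ?_
  · have h := Matrix.isHermitian_mul_conjTranspose_self Y
    rw [conjTranspose_eq_transpose_of_trivial] at h
    exact Matrix.isHermitian_one.sub h
  · intro x hx
    have hxe : star x ⬝ᵥ ((1 - Y * Yᵀ) *ᵥ x) = x ⬝ᵥ x - (Yᵀ *ᵥ x) ⬝ᵥ (Yᵀ *ᵥ x) := by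
      simp [Matrix.sub_mulVec, dotProduct_sub, ← Matrix.mulVec_mulVec,
        Matrix.dotProduct_mulVec, Matrix.vecMul_transpose, dotProduct_comm]
    rw [hxe]
    set v := Yᵀ *ᵥ x with hv
    by_cases hv0 : v = 0
    · rw [hv0]
      simpa using dot_pos hx
    · have h1 := hY.dotProduct_mulVec_pos hv0
      have h1e : star v ⬝ᵥ ((1 - Yᵀ * Y) *ᵥ v) = v ⬝ᵥ v - (Y *ᵥ v) ⬝ᵥ (Y *ᵥ v) := by
        simp [Matrix.sub_mulVec, dotProduct_sub, ← Matrix.mulVec_mulVec,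
          Matrix.dotProduct_mulVec, Matrix.vecMul_transpose, dotProduct_comm,
          Matrix.transpose_transpose]
      rw [h1e] at h1
      have hvx : x ⬝ᵥ (Y *ᵥ v) = v ⬝ᵥ v := by
        rw [Matrix.dotProduct_mulVec]
        conv_lhs => rw [← Matrix.transpose_transpose Y, Matrix.vecMul_transpose]
      have cs := dot_cs x (Y *ᵥ v)
      rw [hvx] at cs
      have hp := dot_pos hx
      have hq := dot_pos hv0
      nlinarith [cs, h1, hp, hq, mul_pos hp h1]

lemma sqrt_isUnit {k : ℕ} {M : Matrix (Fin k) (Fin k) ℝ} (hM : M.PosDef) :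
    IsUnit hM.posSemidef.sqrt.det := by
  rw [isUnit_iff_ne_zero]
  intro h
  have := hM.posSemidef.sqrt_mul_self
  have hd : M.det = 0 := by rw [← this, Matrix.det_mul, h, mul_zero]
  exact hM.det_pos.ne' hd

lemma sqrt_symm {k : ℕ} {M : Matrix (Fin k) (Fin k) ℝ} (hM : M.PosDef) :
    (hM.posSemidef.sqrt)ᵀ = hM.posSemidef.sqrt := by
  have := hM.posSemidef.posSemidef_sqrt.1
  rwa [Matrix.IsHermitian, conjTranspose_eq_transpose_of_trivial] at this

lemma sqrt_inv_symm {k : ℕ} {M : Matrix (Fin k) (Fin k) ℝ} (hM : M.PosDef) :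
    (hM.posSemidef.sqrt⁻¹)ᵀ = hM.posSemidef.sqrt⁻¹ := by
  rw [transpose_nonsing_inv, sqrt_symm hM]

lemma sqrt_sandwich {k : ℕ} {M : Matrix (Fin k) (Fin k) ℝ} (hM : M.PosDef) :
    hM.posSemidef.sqrt⁻¹ * M * hM.posSemidef.sqrt⁻¹ = 1 := by
  have hu := sqrt_isUnit hM
  have h := hM.posSemidef.sqrt_mul_self
  generalize hq : hM.posSemidef.sqrt = s at *
  rw [← h, ← mul_assoc, Matrix.nonsing_inv_mul _ hu, one_mul,
    Matrix.mul_nonsing_inv _ hu]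

lemma key {n m : ℕ} (Y : Matrix (Fin m) (Fin n) ℝ)
    (a : Matrix (Fin n) (Fin n) ℝ) (t : Matrix (Fin m) (Fin m) ℝ)
    (ha : aᵀ = a) (ht : tᵀ = t)
    (hS : a * (1 - Yᵀ * Y) * a = 1) (hT : t * (1 - Y * Yᵀ) * t = 1) :
    (fromBlocks a (Yᵀ * t) (Y * a) t)ᵀ * _root_.J n m * (fromBlocks a (Yᵀ * t) (Y * a) t)
      = _root_.J n m := by
  have hS' : a * a - a * (Yᵀ * (Y * a)) = 1 := by
    rw [← hS]
    simp only [Matrix.mul_sub, Matrix.sub_mul, Matrix.mul_one, Matrix.one_mul, Matrix.mul_assoc]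
  have hT' : t * (Y * (Yᵀ * t)) - t * t = -1 := by
    rw [← hT]
    simp only [Matrix.mul_sub, Matrix.sub_mul, Matrix.mul_one, Matrix.one_mul, Matrix.mul_assoc]
    abel
  rw [_root_.J, fromBlocks_transpose, fromBlocks_multiply, fromBlocks_multiply]
  simp only [Matrix.mul_one, Matrix.mul_zero, Matrix.mul_neg, add_zero, zero_add,
    Matrix.transpose_mul, ha, ht, Matrix.transpose_transpose, Matrix.mul_assoc]
  simp only [Matrix.neg_mul, neg_mul, Matrix.mul_assoc, ← sub_eq_add_neg]
  rw [hS', hT', sub_self, sub_self]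

lemma L0_eq (n m : ℕ) :
    L0 n m = LinearMap.range
      (Matrix.fromRows (1 : Matrix (Fin n) (Fin n) ℝ)
        (0 : Matrix (Fin m) (Fin n) ℝ)).mulVecLin := by
  rw [Matrix.range_mulVecLin, L0, Matrix.col_def]
  congr 1
  have : (Matrix.fromRows (1 : Matrix (Fin n) (Fin n) ℝ) (0 : Matrix (Fin m) (Fin n) ℝ))ᵀ
      = fun j : Fin n => (Pi.single (Sum.inl j) 1 : Fin n ⊕ Fin m → ℝ) := by
    funext j i
    cases i with
    | inl i => simp [Matrix.transpose_apply, Matrix.one_apply, Pi.single_apply, eq_comm]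
    | inr i => simp [Matrix.transpose_apply, Pi.single_apply]
  rw [this]

/-- Given `Y` with `Iₙ - YᵀY` positive definite, `I_m - YYᵀ` is positive definite and the
explicit block matrix `A` lies in `O(n,m)` and maps `L₀` onto the column span of `[Iₙ; Y]`. -/
theorem stmt2 (n m : ℕ) (hn : 0 < n) (hnm : n ≤ m)
    (Y : Matrix (Fin m) (Fin n) ℝ) (hY : (1 - Yᵀ * Y).PosDef) :
    (1 - Y * Yᵀ).PosDef ∧
    ∀ (hY' : (1 - Y * Yᵀ).PosDef)
      (A : Matrix (Fin n ⊕ Fin m) (Fin n ⊕ Fin m) ℝ),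
      A = Matrix.fromBlocks (hY.posSemidef.sqrt)⁻¹ (Yᵀ * (hY'.posSemidef.sqrt)⁻¹)
            (Y * (hY.posSemidef.sqrt)⁻¹) (hY'.posSemidef.sqrt)⁻¹ →
      Aᵀ * J n m * A = J n m ∧
      Submodule.map A.mulVecLin (L0 n m) =
        LinearMap.range (Matrix.fromRows (1 : Matrix (Fin n) (Fin n) ℝ) Y).mulVecLin := by
  refine ⟨posdef_swap Y hY, fun hY' A hA => ⟨?_, ?_⟩⟩
  · rw [hA]
    exact key Y _ _ (sqrt_inv_symm hY) (sqrt_inv_symm hY')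
      (sqrt_sandwich hY) (sqrt_sandwich hY')
  · rw [L0_eq, ← LinearMap.range_comp, ← Matrix.mulVecLin_mul, hA,
      Matrix.fromBlocks_mul_fromRows]
    simp only [Matrix.mul_one, Matrix.mul_zero, add_zero, Matrix.zero_mul]
    have hr : Matrix.fromRows (hY.posSemidef.sqrt)⁻¹ (Y * (hY.posSemidef.sqrt)⁻¹)
        = Matrix.fromRows (1 : Matrix (Fin n) (Fin n) ℝ) Y * (hY.posSemidef.sqrt)⁻¹ := by
      rw [Matrix.fromRows_mul, Matrix.one_mul]
    rw [hr, Matrix.mulVecLin_mul, LinearMap.range_comp, LinearMap.range_eq_top.mpr,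
      Submodule.map_top]
    intro v
    exact ⟨hY.posSemidef.sqrt *ᵥ v, by
      simp [Matrix.mulVecLin_apply, Matrix.mulVec_mulVec,
        Matrix.nonsing_inv_mul _ (sqrt_isUnit hY)]⟩
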